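/- Let W₁, …, Wₙ be matrices where each Wₘ is either A₂(xₘ) or A₁(xₘ), and suppose W_{h₁}, …, W_{h_ℓ} are the A₂'s (so there are r = n − ℓ matrices of type A₁). Then for every i ∈ ℕ, the (i,i) diagonal entry of the product W₁(x₁)⋯Wₙ(xₙ)·S equals qⁱ · t^{ri} · x₁⋯xₙ · ∏_{j=1}^{ℓ} x_{h_j}. -/

import Mathlib

noncomputable def matMul {R : Type*} [CommRing R] (M N : ℕ → ℕ → R) : ℕ → ℕ → R :=
  fun i j => ∑ᶠ k, M i k * N k j

def A1 {R : Type*} [CommRing R] (t x : R) : ℕ → ℕ → R :=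
  fun i j => if i = j then x * t ^ i else 0

def A2 {R : Type*} [CommRing R] (t x : R) : ℕ → ℕ → R :=
  fun i j => if i = j then x ^ 2 else if i = j + 1 then x * (1 - t ^ i) else 0

def Smat {R : Type*} [CommRing R] (q : R) : ℕ → ℕ → R :=
  fun i j => if i = j then q ^ i else 0

def LowT {R : Type*} [CommRing R] (M : ℕ → ℕ → R) : Prop :=
  ∀ i j : ℕ, i < j → M i j = 0

lemma lowT_A1 {R : Type*} [CommRing R] (t x : R) : LowT (A1 t x) := by
  intro i j h
  simp [A1, Nat.ne_of_lt h]

lemma lowT_A2 {R : Type*} [CommRing R] (t x : R) : LowT (A2 t x) := by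
  intro i j h
  have h1 : i ≠ j := Nat.ne_of_lt h
  have h2 : i ≠ j + 1 := by omega
  simp [A2, h1, h2]

lemma lowT_Smat {R : Type*} [CommRing R] (q : R) : LowT (Smat q) := by
  intro i j h
  simp [Smat, Nat.ne_of_lt h]

lemma lowT_matMul {R : Type*} [CommRing R] {M N : ℕ → ℕ → R}
    (hM : LowT M) (hN : LowT N) : LowT (matMul M N) := by
  intro i j h
  apply finsum_eq_zero_of_forall_eq_zero
  intro k
  rcases le_or_gt k i with hk | hk
  · rw [hN k j (lt_of_le_of_lt hk h), mul_zero]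
  · rw [hM i k hk, zero_mul]

lemma matMul_diag {R : Type*} [CommRing R] {M N : ℕ → ℕ → R}
    (hM : LowT M) (hN : LowT N) (i : ℕ) : matMul M N i i = M i i * N i i := by
  apply finsum_eq_single (fun k => M i k * N k i) i
  intro k hk
  rcases lt_or_gt_of_ne hk with h | h
  · rw [hN k i h, mul_zero]
  · rw [hM i k h, zero_mul]

lemma foldr_diag {R : Type*} [CommRing R] (L : List (ℕ → ℕ → R)) (S : ℕ → ℕ → R)
    (hL : ∀ M ∈ L, LowT M) (hS : LowT S) :
    LowT (L.foldr matMul S) ∧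
      ∀ i, (L.foldr matMul S) i i = (L.map (fun M => M i i)).prod * S i i := by
  induction L with
  | nil => exact ⟨hS, fun i => by simp⟩
  | cons A L ih =>
    have hA : LowT A := hL A (by simp)
    obtain ⟨h1, h2⟩ := ih (fun M hM => hL M (by simp [hM]))
    refine ⟨lowT_matMul hA h1, fun i => ?_⟩
    rw [List.foldr_cons, matMul_diag hA h1, h2, List.map_cons, List.prod_cons, mul_assoc]

theorem stmt7 {R : Type*} [CommRing R] (q t : R) (n : ℕ) (x : Fin n → R)
    (isA2 : Fin n → Prop) [DecidablePred isA2] (W : Fin n → ℕ → ℕ → R)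
    (hW : ∀ m, W m = if isA2 m then A2 t (x m) else A1 t (x m)) (i : ℕ) :
    ((List.ofFn W).foldr matMul (Smat q)) i i =
      q ^ i * t ^ ((n - (Finset.univ.filter isA2).card) * i) * (∏ m, x m) *
        ∏ m ∈ Finset.univ.filter isA2, x m := by
  have hL : ∀ M ∈ List.ofFn W, LowT M := by
    intro M hM
    rw [List.mem_ofFn] at hM
    obtain ⟨m, rfl⟩ := hM
    rw [hW m]
    split
    · exact lowT_A2 _ _
    · exact lowT_A1 _ _
  rw [(foldr_diag (List.ofFn W) (Smat q) hL (lowT_Smat q)).2 i]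
  have hmap : (List.ofFn W).map (fun M => M i i) = List.ofFn (fun m => W m i i) := by
    rw [List.map_ofFn]; rfl
  rw [hmap, List.prod_ofFn]
  have hdiag : ∀ m, W m i i = if isA2 m then (x m) ^ 2 else x m * t ^ i := by
    intro m
    rw [hW m]
    split <;> simp [A1, A2]
  have hS : Smat q i i = q ^ i := by simp [Smat]
  rw [hS]
  calc (∏ m, W m i i) * q ^ i
      = (∏ m, if isA2 m then (x m) ^ 2 else x m * t ^ i) * q ^ i := by
        simp_rw [hdiag]
    _ = ((∏ m ∈ Finset.univ.filter isA2, (x m) ^ 2) *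
          ∏ m ∈ Finset.univ.filter (fun m => ¬ isA2 m), (x m * t ^ i)) * q ^ i := by
        rw [Finset.prod_ite]
    _ = _ := by
        rw [Finset.prod_mul_distrib, Finset.prod_const]
        have hcard : (Finset.univ.filter (fun m => ¬ isA2 m)).card =
            n - (Finset.univ.filter isA2).card := by
          have := Finset.card_filter_add_card_filter_not (s := Finset.univ)
            (p := isA2)
          simp only [Finset.card_univ, Fintype.card_fin] at this
          omega
        rw [hcard]
        have hsplit : (∏ m, x m) =
            (∏ m ∈ Finset.univ.filter isA2, x m) *
              ∏ m ∈ Finset.univ.filter (fun m => ¬ isA2 m), x m := by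
          rw [← Finset.prod_filter_mul_prod_filter_not Finset.univ isA2]
        rw [hsplit, ← pow_mul, Finset.prod_pow]
        ring
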